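/- Define b₁,b₂,b₃ : ℝ → ℝ by b₁(s) = e^{1/s} for s < 0, b₁(s) = e^{-1/(s-2)} for s > 2, b₁(s) = 0 otherwise; b₂(s) = e^{-1/(s(1-s))} for 0 < s < 1, b₂(s) = 0 otherwise; b₃(s) = e^{-1/((s-1)(2-s))} for 1 < s < 2, b₃(s) = 0 otherwise. Let γ : ℝ → 𝕃⁴ be a time-like curve parametrized by proper time admitting a Bishop frame (T,B₁,B₂,B₃) with coefficient functions b₁,b₂,b₃. Then γ does not admit a generalized Bishop frame of type C. -/

import Mathlib

open Set Real

noncomputable section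

/-- The Minkowski form on `ℝ⁴ = 𝕃⁴`: `⟨x,y⟩ = -x₀y₀ + x₁y₁ + x₂y₂ + x₃y₃`. -/
def mink (x y : Fin 4 → ℝ) : ℝ :=
  -(x 0 * y 0) + x 1 * y 1 + x 2 * y 2 + x 3 * y 3

/-- `(T, Z₁, Z₂, Z₃)` is an orthonormal frame along a time-like curve with tangent `T`:
the `Zᵢ` are smooth on `I`, pairwise orthonormal (space-like) and orthogonal to `T`. -/
def OrthFrame (I : Set ℝ) (T Z₁ Z₂ Z₃ : ℝ → Fin 4 → ℝ) : Prop :=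
  ContDiffOn ℝ (⊤ : ℕ∞) Z₁ I ∧ ContDiffOn ℝ (⊤ : ℕ∞) Z₂ I ∧ ContDiffOn ℝ (⊤ : ℕ∞) Z₃ I ∧
  ∀ s ∈ I,
    mink (Z₁ s) (Z₁ s) = 1 ∧ mink (Z₂ s) (Z₂ s) = 1 ∧ mink (Z₃ s) (Z₃ s) = 1 ∧
    mink (Z₁ s) (Z₂ s) = 0 ∧ mink (Z₁ s) (Z₃ s) = 0 ∧ mink (Z₂ s) (Z₃ s) = 0 ∧
    mink (T s) (Z₁ s) = 0 ∧ mink (T s) (Z₂ s) = 0 ∧ mink (T s) (Z₃ s) = 0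

/-- `γ` is a smooth time-like curve parametrized by proper time on `I`. -/
def ProperTime (I : Set ℝ) (γ : ℝ → Fin 4 → ℝ) : Prop :=
  ContDiffOn ℝ (⊤ : ℕ∞) γ I ∧ ∀ s ∈ I, mink (deriv γ s) (deriv γ s) = -1

/-- Three smooth real functions on `I`. -/
def Smooth3 (I : Set ℝ) (x₁ x₂ x₃ : ℝ → ℝ) : Prop :=
  ContDiffOn ℝ (⊤ : ℕ∞) x₁ I ∧ ContDiffOn ℝ (⊤ : ℕ∞) x₂ I ∧ ContDiffOn ℝ (⊤ : ℕ∞) x₃ I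

/-- `γ` admits a generalized Bishop frame of type B. -/
def AdmitsB (I : Set ℝ) (γ : ℝ → Fin 4 → ℝ) : Prop :=
  ∃ (Z₁ Z₂ Z₃ : ℝ → Fin 4 → ℝ) (x₁ x₂ x₃ : ℝ → ℝ),
    OrthFrame I (deriv γ) Z₁ Z₂ Z₃ ∧ Smooth3 I x₁ x₂ x₃ ∧
    ∀ s ∈ I,
      deriv (deriv γ) s = x₁ s • Z₁ s + x₂ s • Z₂ s + x₃ s • Z₃ s ∧
      deriv Z₁ s = x₁ s • deriv γ s ∧
      deriv Z₂ s = x₂ s • deriv γ s ∧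
      deriv Z₃ s = x₃ s • deriv γ s

/-- `γ` admits a generalized Bishop frame of type C. -/
def AdmitsC (I : Set ℝ) (γ : ℝ → Fin 4 → ℝ) : Prop :=
  ∃ (Z₁ Z₂ Z₃ : ℝ → Fin 4 → ℝ) (x₁ x₂ x₃ : ℝ → ℝ),
    OrthFrame I (deriv γ) Z₁ Z₂ Z₃ ∧ Smooth3 I x₁ x₂ x₃ ∧
    ∀ s ∈ I,
      deriv (deriv γ) s = x₁ s • Z₁ s + x₂ s • Z₂ s ∧
      deriv Z₁ s = x₁ s • deriv γ s + x₃ s • Z₃ s ∧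
      deriv Z₂ s = x₂ s • deriv γ s ∧
      deriv Z₃ s = (-(x₃ s)) • Z₁ s

/-- `γ` admits a generalized Bishop frame of type D. -/
def AdmitsD (I : Set ℝ) (γ : ℝ → Fin 4 → ℝ) : Prop :=
  ∃ (Z₁ Z₂ Z₃ : ℝ → Fin 4 → ℝ) (x₁ x₂ x₃ : ℝ → ℝ),
    OrthFrame I (deriv γ) Z₁ Z₂ Z₃ ∧ Smooth3 I x₁ x₂ x₃ ∧
    ∀ s ∈ I,
      deriv (deriv γ) s = x₁ s • Z₁ s ∧
      deriv Z₁ s = x₁ s • deriv γ s + x₂ s • Z₂ s + x₃ s • Z₃ s ∧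
      deriv Z₂ s = (-(x₂ s)) • Z₁ s ∧
      deriv Z₃ s = (-(x₃ s)) • Z₁ s

/-- `γ` admits a generalized Bishop frame of type F. -/
def AdmitsF (I : Set ℝ) (γ : ℝ → Fin 4 → ℝ) : Prop :=
  ∃ (Z₁ Z₂ Z₃ : ℝ → Fin 4 → ℝ) (x₁ x₂ x₃ : ℝ → ℝ),
    OrthFrame I (deriv γ) Z₁ Z₂ Z₃ ∧ Smooth3 I x₁ x₂ x₃ ∧
    ∀ s ∈ I,
      deriv (deriv γ) s = x₁ s • Z₁ s ∧
      deriv Z₁ s = x₁ s • deriv γ s + x₂ s • Z₂ s ∧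
      deriv Z₂ s = (-(x₂ s)) • Z₁ s + x₃ s • Z₃ s ∧
      deriv Z₃ s = (-(x₃ s)) • Z₂ s

/-- The first Bishop curvature of Proposition `typeC`. -/
def b₁ex : ℝ → ℝ := fun s =>
  if s < 0 then Real.exp (1 / s)
  else if 2 < s then Real.exp (-(1 / (s - 2)))
  else 0

/-- The second Bishop curvature of Proposition `typeC`. -/
def b₂ex : ℝ → ℝ := fun s =>
  if 0 < s ∧ s < 1 then Real.exp (-(1 / (s * (1 - s)))) else 0

/-- The third Bishop curvature of Proposition `typeC`. -/
def b₃ex : ℝ → ℝ := fun s =>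
  if 1 < s ∧ s < 2 then Real.exp (-(1 / ((s - 1) * (2 - s)))) else 0


lemma mink_comm (v w : Fin 4 → ℝ) : mink v w = mink w v := by simp only [mink]; ring

lemma mink_smul_left (r : ℝ) (v w : Fin 4 → ℝ) : mink (r • v) w = r * mink v w := by
  simp only [mink, Pi.smul_apply, smul_eq_mul]; ring

lemma mink_comb2 (u : Fin 4 → ℝ) (r t : ℝ) (x y : Fin 4 → ℝ) :
    mink u (r • x + t • y) = r * mink u x + t * mink u y := by
  simp only [mink, Pi.add_apply, Pi.smul_apply, smul_eq_mul]; ring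

lemma mink_comb3 (u : Fin 4 → ℝ) (r t q : ℝ) (x y z : Fin 4 → ℝ) :
    mink u (r • x + t • y + q • z) = r * mink u x + t * mink u y + q * mink u z := by
  simp only [mink, Pi.add_apply, Pi.smul_apply, smul_eq_mul]; ring

lemma hasDerivAt_mink {f g : ℝ → Fin 4 → ℝ} {f' g' : Fin 4 → ℝ} {s : ℝ}
    (hf : HasDerivAt f f' s) (hg : HasDerivAt g g' s) :
    HasDerivAt (fun t => mink (f t) (g t)) (mink f' (g s) + mink (f s) g') s := by
  have hfc : ∀ i, HasDerivAt (fun t => f t i) (f' i) s := fun i => by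
    exact hasDerivAt_pi.mp hf i
  have hgc : ∀ i, HasDerivAt (fun t => g t i) (g' i) s := fun i => by
    exact hasDerivAt_pi.mp hg i
  have h0 := (hfc 0).mul (hgc 0)
  have h1 := (hfc 1).mul (hgc 1)
  have h2 := (hfc 2).mul (hgc 2)
  have h3 := (hfc 3).mul (hgc 3)
  have H := ((h0.neg.add h1).add h2).add h3
  simp only [mink]
  convert H using 1
  · rfl
  · rfl
  · rfl
  · ring

lemma parseval (T B₁ B₂ B₃ v w : Fin 4 → ℝ)
    (hTT : mink T T = -1) (h11 : mink B₁ B₁ = 1) (h22 : mink B₂ B₂ = 1) (h33 : mink B₃ B₃ = 1)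
    (h12 : mink B₁ B₂ = 0) (h13 : mink B₁ B₃ = 0) (h23 : mink B₂ B₃ = 0)
    (hT1 : mink T B₁ = 0) (hT2 : mink T B₂ = 0) (hT3 : mink T B₃ = 0) :
    mink v w = -(mink v T * mink w T) + mink v B₁ * mink w B₁ + mink v B₂ * mink w B₂
      + mink v B₃ * mink w B₃ := by
  simp only [mink] at *
  set η : Matrix (Fin 4) (Fin 4) ℝ := Matrix.diagonal ![-1, 1, 1, 1] with hη
  set M : Matrix (Fin 4) (Fin 4) ℝ := Matrix.of ![T, B₁, B₂, B₃] with hM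
  have key : M * (η * M.transpose * η) = 1 := by
    ext i j
    fin_cases i <;> fin_cases j <;>
      · simp [hM, hη, Matrix.mul_apply, Fin.sum_univ_four, Matrix.diagonal, Matrix.one_apply,
          Matrix.transpose_apply, Matrix.vecHead, Matrix.vecTail, Function.comp]
        linarith
  have key2 : (η * M.transpose * η) * M = 1 := mul_eq_one_comm.mp key
  have e : ∀ i j : Fin 4, ((η * M.transpose * η) * M) i j = (1 : Matrix (Fin 4) (Fin 4) ℝ) i j :=
    fun i j => by rw [key2]
  have r00 := e 0 0; have r01 := e 0 1; have r02 := e 0 2; have r03 := e 0 3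
  have r10 := e 1 0; have r11 := e 1 1; have r12 := e 1 2; have r13 := e 1 3
  have r20 := e 2 0; have r21 := e 2 1; have r22 := e 2 2; have r23 := e 2 3
  have r30 := e 3 0; have r31 := e 3 1; have r32 := e 3 2; have r33 := e 3 3
  simp [hM, hη, Matrix.mul_apply, Fin.sum_univ_four, Matrix.diagonal, Matrix.one_apply,
    Matrix.transpose_apply, Matrix.vecHead, Matrix.vecTail, Function.comp]
    at r00 r01 r02 r03 r10 r11 r12 r13 r20 r21 r22 r23 r30 r31 r32 r33
  linear_combination (v 0 * w 0) * r00 - (v 0 * w 1) * r01 - (v 0 * w 2) * r02 - (v 0 * w 3) * r03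
    + (v 1 * w 0) * r10 - (v 1 * w 1) * r11 - (v 1 * w 2) * r12 - (v 1 * w 3) * r13
    + (v 2 * w 0) * r20 - (v 2 * w 1) * r21 - (v 2 * w 2) * r22 - (v 2 * w 3) * r23
    + (v 3 * w 0) * r30 - (v 3 * w 1) * r31 - (v 3 * w 2) * r32 - (v 3 * w 3) * r33

/-- a time-like curve parametrized by proper time whose Bishop frame has
the coefficient functions `b₁ex, b₂ex, b₃ex` does not admit a generalized Bishop frame of
type C. -/
theorem stmt_18 (γ : ℝ → Fin 4 → ℝ) (hγ : ProperTime Set.univ γ)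
    (B₁ B₂ B₃ : ℝ → Fin 4 → ℝ)
    (hB : OrthFrame Set.univ (deriv γ) B₁ B₂ B₃)
    (hBEq : ∀ s : ℝ,
      deriv (deriv γ) s = b₁ex s • B₁ s + b₂ex s • B₂ s + b₃ex s • B₃ s ∧
      deriv B₁ s = b₁ex s • deriv γ s ∧
      deriv B₂ s = b₂ex s • deriv γ s ∧
      deriv B₃ s = b₃ex s • deriv γ s) :
    ¬ AdmitsC Set.univ γ := by
  rintro ⟨Z₁, Z₂, Z₃, x₁, x₂, x₃, ⟨hZ1s, hZ2s, hZ3s, hZorth⟩, hsm, hEq⟩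
  obtain ⟨hB1s, hB2s, hB3s, hBorth⟩ := hB
  obtain ⟨hγs, hγpt⟩ := hγ
  -- differentiability
  have hB1d : Differentiable ℝ B₁ := (contDiffOn_univ.mp hB1s).differentiable (by simp)
  have hB2d : Differentiable ℝ B₂ := (contDiffOn_univ.mp hB2s).differentiable (by simp)
  have hB3d : Differentiable ℝ B₃ := (contDiffOn_univ.mp hB3s).differentiable (by simp)
  have hZ2d : Differentiable ℝ Z₂ := (contDiffOn_univ.mp hZ2s).differentiable (by simp)
  have hZ3d : Differentiable ℝ Z₃ := (contDiffOn_univ.mp hZ3s).differentiable (by simp)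
  set T : ℝ → Fin 4 → ℝ := deriv γ with hT
  set a₁ : ℝ → ℝ := fun s => mink (Z₃ s) (B₁ s) with ha₁def
  set a₂ : ℝ → ℝ := fun s => mink (Z₃ s) (B₂ s) with ha₂def
  set a₃ : ℝ → ℝ := fun s => mink (Z₃ s) (B₃ s) with ha₃def
  set c₁ : ℝ → ℝ := fun s => mink (Z₂ s) (B₁ s) with hc₁def
  set c₂ : ℝ → ℝ := fun s => mink (Z₂ s) (B₂ s) with hc₂def
  set c₃ : ℝ → ℝ := fun s => mink (Z₂ s) (B₃ s) with hc₃def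
  -- orthogonality facts at every s
  have oB := fun s => hBorth s (mem_univ s)
  have oZ := fun s => hZorth s (mem_univ s)
  have hTT := fun s => hγpt s (mem_univ s)
  -- the cᵢ are constant
  have hcder : ∀ (Bi : ℝ → Fin 4 → ℝ) (bi : ℝ → ℝ), Differentiable ℝ Bi →
      (∀ s, deriv Bi s = bi s • T s) → (∀ s, mink (T s) (Bi s) = 0) →
      ∀ s, HasDerivAt (fun t => mink (Z₂ t) (Bi t)) 0 s := by
    intro Bi bi hBid hBider hTBi s
    have H := hasDerivAt_mink (hZ2d s).hasDerivAt (hBid s).hasDerivAt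
    rw [(hEq s (mem_univ s)).2.2.1, hBider s] at H
    have e1 : mink (x₂ s • T s) (Bi s) = x₂ s * mink (T s) (Bi s) := mink_smul_left _ _ _
    have e2 : mink (Z₂ s) (bi s • T s) = bi s * mink (T s) (Z₂ s) := by
      rw [mink_comm]; exact mink_smul_left _ _ _
    rw [e1, e2, hTBi s, (oZ s).2.2.2.2.2.2.2.1] at H
    simpa using H
  have hc1 := hcder B₁ b₁ex hB1d (fun s => (hBEq s).2.1) (fun s => (oB s).2.2.2.2.2.2.1)
  have hc2 := hcder B₂ b₂ex hB2d (fun s => (hBEq s).2.2.1) (fun s => (oB s).2.2.2.2.2.2.2.1)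
  have hc3 := hcder B₃ b₃ex hB3d (fun s => (hBEq s).2.2.2) (fun s => (oB s).2.2.2.2.2.2.2.2)
  have hc1const : ∀ s, c₁ s = c₁ 0 := fun s =>
    is_const_of_deriv_eq_zero (fun t => (hc1 t).differentiableAt) (fun t => (hc1 t).deriv) s 0
  have hc2const : ∀ s, c₂ s = c₂ 0 := fun s =>
    is_const_of_deriv_eq_zero (fun t => (hc2 t).differentiableAt) (fun t => (hc2 t).deriv) s 0
  have hc3const : ∀ s, c₃ s = c₃ 0 := fun s =>
    is_const_of_deriv_eq_zero (fun t => (hc3 t).differentiableAt) (fun t => (hc3 t).deriv) s 0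
  -- Parseval consequences
  have P : ∀ (s : ℝ) (v w : Fin 4 → ℝ), mink v w =
      -(mink v (T s) * mink w (T s)) + mink v (B₁ s) * mink w (B₁ s)
        + mink v (B₂ s) * mink w (B₂ s) + mink v (B₃ s) * mink w (B₃ s) := by
    intro s v w
    obtain ⟨q1, q2, q3, q4, q5, q6, q7, q8, q9⟩ := oB s
    exact parseval (T s) (B₁ s) (B₂ s) (B₃ s) v w (hTT s) q1 q2 q3 q4 q5 q6 q7 q8 q9
  have hZ3T : ∀ s, mink (Z₃ s) (T s) = 0 := fun s => by
    rw [mink_comm]; exact (oZ s).2.2.2.2.2.2.2.2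
  have hZ2T : ∀ s, mink (Z₂ s) (T s) = 0 := fun s => by
    rw [mink_comm]; exact (oZ s).2.2.2.2.2.2.2.1
  have hnorma : ∀ s, a₁ s ^ 2 + a₂ s ^ 2 + a₃ s ^ 2 = 1 := by
    intro s
    have := P s (Z₃ s) (Z₃ s)
    rw [(oZ s).2.2.1, hZ3T s] at this
    nlinarith [this]
  have hnormc : ∀ s, c₁ s ^ 2 + c₂ s ^ 2 + c₃ s ^ 2 = 1 := by
    intro s
    have := P s (Z₂ s) (Z₂ s)
    rw [(oZ s).2.1, hZ2T s] at this
    nlinarith [this]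
  have hac : ∀ s, a₁ s * c₁ s + a₂ s * c₂ s + a₃ s * c₃ s = 0 := by
    intro s
    have := P s (Z₃ s) (Z₂ s)
    rw [mink_comm (Z₃ s) (Z₂ s), (oZ s).2.2.2.2.2.1, hZ3T s, hZ2T s] at this
    nlinarith [this]
  -- b ⬝ a = 0
  have hab : ∀ s, b₁ex s * a₁ s + b₂ex s * a₂ s + b₃ex s * a₃ s = 0 := by
    intro s
    have h1 := (hBEq s).1
    have h2 := (hEq s (mem_univ s)).1
    have e1 : mink (Z₃ s) (deriv (deriv γ) s)
        = b₁ex s * a₁ s + b₂ex s * a₂ s + b₃ex s * a₃ s := by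
      rw [h1, mink_comb3]
    have e2 : mink (Z₃ s) (deriv (deriv γ) s) = 0 := by
      rw [h2, mink_comb2, mink_comm (Z₃ s) (Z₁ s), (oZ s).2.2.2.2.1,
        mink_comm (Z₃ s) (Z₂ s), (oZ s).2.2.2.2.2.1]
      ring
    rw [← e1, e2]
  -- continuity of the aᵢ
  have hZ3c : Continuous Z₃ := hZ3d.continuous
  have hB1c : Continuous B₁ := hB1d.continuous
  have hB2c : Continuous B₂ := hB2d.continuous
  have hB3c : Continuous B₃ := hB3d.continuous
  have hconta : ∀ (Bi : ℝ → Fin 4 → ℝ), Continuous Bi →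
      Continuous (fun s => mink (Z₃ s) (Bi s)) := by
    intro Bi hBic
    simp only [mink]
    fun_prop
  have ha₁c : Continuous a₁ := hconta B₁ hB1c
  have ha₂c : Continuous a₂ := hconta B₂ hB2c
  have ha₃c : Continuous a₃ := hconta B₃ hB3c
  -- vanishing of b components off their supports, positivity on supports
  have hb1_0 : ∀ s ∈ Icc (0:ℝ) 2, b₁ex s = 0 := by
    intro s hs
    simp only [b₁ex]
    rw [if_neg (not_lt.mpr hs.1), if_neg (not_lt.mpr hs.2)]
  have hb2_0 : ∀ s, ¬(0 < s ∧ s < 1) → b₂ex s = 0 := by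
    intro s hs; simp only [b₂ex, if_neg hs]
  have hb3_0 : ∀ s, ¬(1 < s ∧ s < 2) → b₃ex s = 0 := by
    intro s hs; simp only [b₃ex, if_neg hs]
  -- aᵢ vanish on the closures
  have ha₂Ioo : EqOn a₂ (fun _ => (0:ℝ)) (Ioo 0 1) := by
    intro s hs
    have hb1 : b₁ex s = 0 := hb1_0 s ⟨hs.1.le, by linarith [hs.2]⟩
    have hb3 : b₃ex s = 0 := hb3_0 s (by rintro ⟨h, -⟩; linarith [hs.2])
    have hb2 : 0 < b₂ex s := by
      simp only [b₂ex]
      rw [if_pos (⟨hs.1, hs.2⟩ : 0 < s ∧ s < 1)]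
      exact Real.exp_pos _
    have := hab s
    rw [hb1, hb3] at this
    have : b₂ex s * a₂ s = 0 := by linarith
    simpa using (mul_eq_zero.mp this).resolve_left (ne_of_gt hb2)
  have ha₃Ioo : EqOn a₃ (fun _ => (0:ℝ)) (Ioo 1 2) := by
    intro s hs
    have hb1 : b₁ex s = 0 := hb1_0 s ⟨by linarith [hs.1], hs.2.le⟩
    have hb2 : b₂ex s = 0 := hb2_0 s (by rintro ⟨-, h⟩; linarith [hs.1])
    have hb3 : 0 < b₃ex s := by
      simp only [b₃ex]
      rw [if_pos (⟨hs.1, hs.2⟩ : 1 < s ∧ s < 2)]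
      exact Real.exp_pos _
    have := hab s
    rw [hb1, hb2] at this
    have : b₃ex s * a₃ s = 0 := by linarith
    simpa using (mul_eq_zero.mp this).resolve_left (ne_of_gt hb3)
  have ha₁Iio : EqOn a₁ (fun _ => (0:ℝ)) (Iio 0) := by
    intro s hs
    have hb1 : 0 < b₁ex s := by
      simp only [b₁ex]
      rw [if_pos (show s < 0 from hs)]
      exact Real.exp_pos _
    have hb2 : b₂ex s = 0 := hb2_0 s (by rintro ⟨h, -⟩; exact absurd hs (not_lt.mpr h.le))
    have hb3 : b₃ex s = 0 := hb3_0 s (by rintro ⟨h, -⟩; simp only [mem_Iio] at hs; linarith)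
    have := hab s
    rw [hb2, hb3] at this
    have : b₁ex s * a₁ s = 0 := by linarith
    simpa using (mul_eq_zero.mp this).resolve_left (ne_of_gt hb1)
  have ha₁Ioi : EqOn a₁ (fun _ => (0:ℝ)) (Ioi 2) := by
    intro s hs
    have hs2 : (2:ℝ) < s := hs
    have hb1 : 0 < b₁ex s := by
      simp only [b₁ex]
      rw [if_neg (by linarith), if_pos hs2]
      exact Real.exp_pos _
    have hb2 : b₂ex s = 0 := hb2_0 s (by rintro ⟨-, h⟩; linarith)
    have hb3 : b₃ex s = 0 := hb3_0 s (by rintro ⟨-, h⟩; linarith)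
    have := hab s
    rw [hb2, hb3] at this
    have : b₁ex s * a₁ s = 0 := by linarith
    simpa using (mul_eq_zero.mp this).resolve_left (ne_of_gt hb1)
  -- boundary values
  have ha₂cl : EqOn a₂ (fun _ => (0:ℝ)) (Icc 0 1) := by
    have := ha₂Ioo.closure ha₂c continuous_const
    rwa [closure_Ioo (by norm_num : (0:ℝ) ≠ 1)] at this
  have ha₃cl : EqOn a₃ (fun _ => (0:ℝ)) (Icc 1 2) := by
    have := ha₃Ioo.closure ha₃c continuous_const
    rwa [closure_Ioo (by norm_num : (1:ℝ) ≠ 2)] at this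
  have ha₁0 : a₁ 0 = 0 := by
    have := ha₁Iio.closure ha₁c continuous_const
    rw [closure_Iio] at this
    exact this (by norm_num : (0:ℝ) ∈ Iic 0)
  have ha₁2 : a₁ 2 = 0 := by
    have := ha₁Ioi.closure ha₁c continuous_const
    rw [closure_Ioi] at this
    exact this (by norm_num : (2:ℝ) ∈ Ici 2)
  have ha₂0 : a₂ 0 = 0 := ha₂cl (by norm_num)
  have ha₂1 : a₂ 1 = 0 := ha₂cl (by norm_num)
  have ha₃1 : a₃ 1 = 0 := ha₃cl (by norm_num)
  have ha₃2 : a₃ 2 = 0 := ha₃cl (by norm_num)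
  -- conclude each cᵢ vanishes
  have hc1_0 : c₁ 0 = 0 := by
    have hn := hnorma 1
    rw [ha₂1, ha₃1] at hn
    have h1 : a₁ 1 ≠ 0 := by intro h; rw [h] at hn; norm_num at hn
    have := hac 1
    rw [ha₂1, ha₃1] at this
    have : a₁ 1 * c₁ 1 = 0 := by linarith
    have := (mul_eq_zero.mp this).resolve_left h1
    rwa [hc1const 1] at this
  have hc2_0 : c₂ 0 = 0 := by
    have hn := hnorma 2
    rw [ha₁2, ha₃2] at hn
    have h1 : a₂ 2 ≠ 0 := by intro h; rw [h] at hn; norm_num at hn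
    have := hac 2
    rw [ha₁2, ha₃2] at this
    have : a₂ 2 * c₂ 2 = 0 := by linarith
    have := (mul_eq_zero.mp this).resolve_left h1
    rwa [hc2const 2] at this
  have hc3_0 : c₃ 0 = 0 := by
    have hn := hnorma 0
    rw [ha₁0, ha₂0] at hn
    have h1 : a₃ 0 ≠ 0 := by intro h; rw [h] at hn; norm_num at hn
    have := hac 0
    rw [ha₁0, ha₂0] at this
    have : a₃ 0 * c₃ 0 = 0 := by linarith
    exact (mul_eq_zero.mp this).resolve_left h1
  have := hnormc 0
  rw [hc1_0, hc2_0, hc3_0] at this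
  norm_num at this
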